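/- Let P be an irreducible row-stochastic matrix on finite X with strictly positive entries, stationary distribution π, time reversal P*, and let P_m = (P + P*)/2 be the additive reversiblization. Then for every reversible irreducible row-stochastic matrix P̄ with positive entries, the Pythagorean identity D(P ‖ P̄) = D(P ‖ P_m) + D(P_m ‖ P̄) holds, where D(P₁ ‖ P₂) = ∑_{x,x'} π₁(x)P₁(x,x') log(P₁(x,x')/P₂(x,x')) is the informational divergence rate (π₁ the stationary distribution of P₁). -/

import Mathlib

/-- Pythagorean identity for the m-projection (additive
reversiblization): D(P‖P̄) = D(P‖P_m) + D(P_m‖P̄) for every reversible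
positive row-stochastic P̄. -/
theorem m_projection_pythagorean {X : Type*} [Fintype X]
    (P Pbar : Matrix X X ℝ) (π πbar : X → ℝ)
    (hPpos : ∀ x x', 0 < P x x')
    (hProw : ∀ x, ∑ x', P x x' = 1)
    (hπpos : ∀ x, 0 < π x) (hπsum : ∑ x, π x = 1)
    (hstat : ∀ x', ∑ x, π x * P x x' = π x')
    (hPbarpos : ∀ x x', 0 < Pbar x x')
    (hPbarrow : ∀ x, ∑ x', Pbar x x' = 1)
    (hπbarpos : ∀ x, 0 < πbar x) (hπbarsum : ∑ x, πbar x = 1)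
    (hπbarstat : ∀ x', ∑ x, πbar x * Pbar x x' = πbar x')
    (hrev : ∀ x x', πbar x * Pbar x x' = πbar x' * Pbar x' x)
    (Pm : Matrix X X ℝ)
    (hPm : ∀ x x', Pm x x' = (P x x' + π x' * P x' x / π x) / 2) :
    ∑ x, ∑ x', π x * P x x' * Real.log (P x x' / Pbar x x') =
      (∑ x, ∑ x', π x * P x x' * Real.log (P x x' / Pm x x')) +
      ∑ x, ∑ x', π x * Pm x x' * Real.log (Pm x x' / Pbar x x') := by
  have hPmpos : ∀ x x', 0 < Pm x x' := by
    intro x x'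
    rw [hPm]
    have := hPpos x x'
    have := hPpos x' x
    have := hπpos x
    have := hπpos x'
    positivity
  -- π Pm expressed without division
  have hπPm : ∀ x x', π x * Pm x x' = (π x * P x x' + π x' * P x' x) / 2 := by
    intro x x'
    have hx := (hπpos x).ne'
    rw [hPm]
    field_simp
  -- Pm is reversible w.r.t. π
  have hPmrev : ∀ x x', π x * Pm x x' = π x' * Pm x' x := by
    intro x x'
    rw [hπPm, hπPm]; ring
  set a : X → X → ℝ := fun x x' => π x * P x x' - π x * Pm x x' with ha
  set f : X → X → ℝ := fun x x' => Real.log (Pm x x') - Real.log (Pbar x x') with hf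
  set g : X → ℝ := fun x => Real.log (π x) - Real.log (πbar x) with hg
  have hanti : ∀ x x', a x x' = - a x' x := by
    intro x x'
    simp only [ha, hπPm]; ring
  have hfg : ∀ x x', f x x' - f x' x = g x' - g x := by
    intro x x'
    have h1 : Real.log (π x) + Real.log (Pm x x') =
        Real.log (π x') + Real.log (Pm x' x) := by
      rw [← Real.log_mul (hπpos x).ne' (hPmpos x x').ne',
          ← Real.log_mul (hπpos x').ne' (hPmpos x' x).ne', hPmrev]
    have h2 : Real.log (πbar x) + Real.log (Pbar x x') =
        Real.log (πbar x') + Real.log (Pbar x' x) := by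
      rw [← Real.log_mul (hπbarpos x).ne' (hPbarpos x x').ne',
          ← Real.log_mul (hπbarpos x').ne' (hPbarpos x' x).ne', hrev]
    simp only [hf, hg]
    linarith
  have hcol : ∀ x', ∑ x, a x x' = 0 := by
    intro x'
    simp only [ha, hπPm]
    rw [Finset.sum_sub_distrib, hstat]
    have : ∑ x, (π x * P x x' + π x' * P x' x) / 2
        = ((∑ x, π x * P x x') + π x' * ∑ x, P x' x) / 2 := by
      rw [Finset.mul_sum, ← Finset.sum_add_distrib, ← Finset.sum_div]
    rw [this, hstat, hProw]
    ring
  have hrow : ∀ x, ∑ x', a x x' = 0 := by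
    intro x
    simp only [ha, hπPm]
    rw [Finset.sum_sub_distrib, ← Finset.mul_sum, hProw]
    have : ∑ x', (π x * P x x' + π x' * P x' x) / 2
        = (π x * ∑ x', P x x' + ∑ x', π x' * P x' x) / 2 := by
      rw [Finset.mul_sum, ← Finset.sum_add_distrib, ← Finset.sum_div]
    rw [this, hProw, hstat]
    ring
  -- key: T = ∑∑ a f = 0
  have key : ∑ x, ∑ x', a x x' * f x x' = 0 := by
    have hswap : ∑ x, ∑ x', a x x' * f x x' = - ∑ x, ∑ x', a x x' * f x' x := by
      calc ∑ x, ∑ x', a x x' * f x x'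
          = ∑ x, ∑ x', -(a x' x * f x x') := by
            refine Finset.sum_congr rfl fun x _ => Finset.sum_congr rfl fun x' _ => ?_
            rw [hanti x x']; ring
        _ = ∑ x', ∑ x, -(a x' x * f x x') := Finset.sum_comm
        _ = - ∑ x', ∑ x, a x' x * f x x' := by simp [Finset.sum_neg_distrib]
        _ = - ∑ x, ∑ x', a x x' * f x' x := rfl
    have h2T : (2 : ℝ) * ∑ x, ∑ x', a x x' * f x x'
        = ∑ x, ∑ x', a x x' * (f x x' - f x' x) := by
      have : ∑ x, ∑ x', a x x' * (f x x' - f x' x)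
          = (∑ x, ∑ x', a x x' * f x x') - ∑ x, ∑ x', a x x' * f x' x := by
        simp [mul_sub, Finset.sum_sub_distrib]
      rw [this]
      nlinarith [hswap]
    have hgsum : ∑ x, ∑ x', a x x' * (g x' - g x) = 0 := by
      have h1 : ∑ x, ∑ x', a x x' * g x' = 0 := by
        rw [Finset.sum_comm]
        refine Finset.sum_eq_zero fun x' _ => ?_
        rw [← Finset.sum_mul, hcol x', zero_mul]
      have h2 : ∑ x, ∑ x', a x x' * g x = 0 := by
        refine Finset.sum_eq_zero fun x _ => ?_
        rw [show (∑ x', a x x' * g x) = (∑ x', a x x') * g x by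
          rw [Finset.sum_mul], hrow x, zero_mul]
      calc ∑ x, ∑ x', a x x' * (g x' - g x)
          = (∑ x, ∑ x', a x x' * g x') - ∑ x, ∑ x', a x x' * g x := by
            simp [mul_sub, Finset.sum_sub_distrib]
        _ = 0 := by rw [h1, h2, sub_zero]
    have : (2 : ℝ) * ∑ x, ∑ x', a x x' * f x x' = 0 := by
      rw [h2T]
      rw [show (∑ x, ∑ x', a x x' * (f x x' - f x' x))
          = ∑ x, ∑ x', a x x' * (g x' - g x) from
        Finset.sum_congr rfl fun x _ => Finset.sum_congr rfl fun x' _ => by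
          rw [hfg x x']]
      exact hgsum
    linarith
  -- expand logs and conclude
  have expand : ∀ x x',
      π x * P x x' * Real.log (P x x' / Pbar x x') -
        (π x * P x x' * Real.log (P x x' / Pm x x') +
         π x * Pm x x' * Real.log (Pm x x' / Pbar x x'))
      = a x x' * f x x' := by
    intro x x'
    rw [Real.log_div (hPpos x x').ne' (hPbarpos x x').ne',
        Real.log_div (hPpos x x').ne' (hPmpos x x').ne',
        Real.log_div (hPmpos x x').ne' (hPbarpos x x').ne']
    simp only [ha, hf]
    ring
  have hsum : (∑ x, ∑ x', π x * P x x' * Real.log (P x x' / Pbar x x')) -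
      ((∑ x, ∑ x', π x * P x x' * Real.log (P x x' / Pm x x')) +
       ∑ x, ∑ x', π x * Pm x x' * Real.log (Pm x x' / Pbar x x')) = 0 := by
    rw [← Finset.sum_add_distrib, ← Finset.sum_sub_distrib]
    calc ∑ x, ((∑ x', π x * P x x' * Real.log (P x x' / Pbar x x')) -
          ((∑ x', π x * P x x' * Real.log (P x x' / Pm x x')) +
           ∑ x', π x * Pm x x' * Real.log (Pm x x' / Pbar x x')))
        = ∑ x, ∑ x', a x x' * f x x' := by
          refine Finset.sum_congr rfl fun x _ => ?_
          rw [← Finset.sum_add_distrib, ← Finset.sum_sub_distrib]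
          exact Finset.sum_congr rfl fun x' _ => expand x x'
      _ = 0 := key
  linarith
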